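/- The four-dimensional algebra C with basis e1, e2, e3, e4 and nonzero products e1e1 = e4e4 = e2, e1e2 = e3 is nilpotent of index 4 (all products of any four elements vanish), and satisfies the left-anticommutativity identity (ab)c + (ba)c = 0 and the di-Malcev identity a(b(cd)) - b(c(ad)) - c((ab)d) - (ac)(bd) - (a(bc))d = 0; hence C is a Malcev dialgebra that is not a binary Leibniz algebra. -/
import Mathlib


/-- Multiplication of the 4-dimensional algebra C with e1e1 = e2, e4e4 = e2,
e1e2 = e3 (extended bilinearly); basis vectors are indexed 0,1,2,3. -/
def mulC {K : Type*} [Field K] (v w : Fin 4 → K) : Fin 4 → K :=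
  ![0, v 0 * w 0 + v 3 * w 3, v 0 * w 1, 0]

/-- The Leibniz discriminant ⟨a,b,c⟩ with respect to mulC. -/
def ltC {K : Type*} [Field K] (a b c : Fin 4 → K) : Fin 4 → K :=
  mulC (mulC a b) c - mulC a (mulC b c) + mulC b (mulC a c)

theorem stmt_18 {K : Type*} [Field K] (h2 : (2 : K) ≠ 0) :
    -- nilpotency of index 4: every product of four elements vanishes
    (∀ a b c d : Fin 4 → K,
      mulC (mulC (mulC a b) c) d = 0 ∧
      mulC (mulC a (mulC b c)) d = 0 ∧
      mulC (mulC a b) (mulC c d) = 0 ∧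
      mulC a (mulC (mulC b c) d) = 0 ∧
      mulC a (mulC b (mulC c d)) = 0) ∧
    -- left anticommutativity
    (∀ a b c : Fin 4 → K, mulC (mulC a b) c + mulC (mulC b a) c = 0) ∧
    -- di-Malcev identity
    (∀ a b c d : Fin 4 → K,
      mulC a (mulC b (mulC c d)) - mulC b (mulC c (mulC a d))
        - mulC c (mulC (mulC a b) d) - mulC (mulC a c) (mulC b d)
        - mulC (mulC a (mulC b c)) d = 0) ∧
    -- C is not a binary Leibniz algebra
    ltC (Pi.single 0 1 + Pi.single 3 1) (Pi.single 3 1) (Pi.single 0 1 + Pi.single 3 1) ≠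
      (0 : Fin 4 → K) := by
  refine ⟨?_, ?_, ?_, ?_⟩
  · intro a b c d
    refine ⟨?_, ?_, ?_, ?_, ?_⟩ <;>
      (funext i; fin_cases i <;> simp [mulC])
  · intro a b c
    funext i; fin_cases i <;> simp [mulC] <;> ring
  · intro a b c d
    funext i; fin_cases i <;> simp [mulC] <;> ring
  · intro h
    have := congrFun h 2
    simp [ltC, mulC, Pi.single] at this
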